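/- For the dimensionless van der Waals isotherm at T = 0.85, the function ρ ↦ ∂_ρ p(ρ, 0.85), with p(ρ,T) = 8Tρ/(3-ρ) - 3ρ², has exactly two zeros ρ⁻ < ρ⁺ in (0,3), with ρ⁻ ∈ (0.58, 0.59) and ρ⁺ ∈ (1.48, 1.49). -/

import Mathlib

noncomputable def vdWg (x : ℝ) : ℝ := x ^ 3 - 6 * x ^ 2 + 9 * x - 3.4

lemma vdW_hasDerivAt {ρ : ℝ} (h : ρ ≠ 3) :
    HasDerivAt (fun r : ℝ => 8 * 0.85 * r / (3 - r) - 3 * r ^ 2)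
      (20.4 / (3 - ρ) ^ 2 - 6 * ρ) ρ := by
  have hne : (3 : ℝ) - ρ ≠ 0 := sub_ne_zero.mpr (Ne.symm h)
  have h1 : HasDerivAt (fun r : ℝ => 8 * 0.85 * r) (8 * 0.85) ρ := by
    simpa using (hasDerivAt_id ρ).const_mul (8 * 0.85 : ℝ)
  have h2 : HasDerivAt (fun r : ℝ => 3 - r) (-1) ρ := by
    simpa using (hasDerivAt_id ρ).const_sub (3:ℝ)
  have h3 := (hasDerivAt_pow 2 ρ).const_mul (3:ℝ)
  have := (h1.div h2 hne).sub h3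
  refine this.congr_deriv ?_
  push_cast
  field_simp
  ring

lemma vdW_deriv_zero_iff {ρ : ℝ} (h : ρ ≠ 3) :
    deriv (fun r : ℝ => 8 * 0.85 * r / (3 - r) - 3 * r ^ 2) ρ = 0 ↔ vdWg ρ = 0 := by
  have hne : (3 : ℝ) - ρ ≠ 0 := sub_ne_zero.mpr (Ne.symm h)
  rw [(vdW_hasDerivAt h).deriv]
  rw [sub_eq_zero, div_eq_iff (by positivity)]
  unfold vdWg
  constructor
  · intro hh; nlinarith [hh]
  · intro hh; nlinarith [hh]

/-- At `T = 0.85`, the derivative `ρ ↦ ∂_ρ p(ρ, 0.85)` of the van der Waals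
pressure has exactly two zeros `ρ⁻ < ρ⁺` in `(0,3)`, with
`ρ⁻ ∈ (0.58, 0.59)` and `ρ⁺ ∈ (1.48, 1.49)`. -/
theorem vdW_spinodal_boundaries :
    ∃ ρm ρp : ℝ,
      ρm ∈ Set.Ioo (0.58 : ℝ) 0.59 ∧ ρp ∈ Set.Ioo (1.48 : ℝ) 1.49 ∧
      deriv (fun r : ℝ => 8 * 0.85 * r / (3 - r) - 3 * r ^ 2) ρm = 0 ∧
      deriv (fun r : ℝ => 8 * 0.85 * r / (3 - r) - 3 * r ^ 2) ρp = 0 ∧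
      ∀ ρ ∈ Set.Ioo (0 : ℝ) 3,
        deriv (fun r : ℝ => 8 * 0.85 * r / (3 - r) - 3 * r ^ 2) ρ = 0 →
          ρ = ρm ∨ ρ = ρp := by
  have hcont : ∀ a b : ℝ, ContinuousOn vdWg (Set.Icc a b) := by
    intro a b
    exact (Continuous.continuousOn (by unfold vdWg; continuity))
  have h1 : (0:ℝ) ∈ Set.Ioo (vdWg 0.58) (vdWg 0.59) := by
    constructor <;> (unfold vdWg; norm_num)
  obtain ⟨ρm, hρm, hgm⟩ := intermediate_value_Ioo (by norm_num : (0.58:ℝ) ≤ 0.59)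
    (hcont 0.58 0.59) h1
  have h2 : (0:ℝ) ∈ Set.Ioo (vdWg 1.49) (vdWg 1.48) := by
    constructor <;> (unfold vdWg; norm_num)
  obtain ⟨ρp, hρp, hgp⟩ := intermediate_value_Ioo' (by norm_num : (1.48:ℝ) ≤ 1.49)
    (hcont 1.48 1.49) h2
  have hmne : ρm ≠ 3 := by have := hρm.2; intro hh; rw [hh] at this; norm_num at this
  have hpne : ρp ≠ 3 := by have := hρp.2; intro hh; rw [hh] at this; norm_num at this
  have hmlt : ρm < ρp := lt_trans hρm.2 (lt_trans (by norm_num) hρp.1)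
  have hmp : ρm ≠ ρp := ne_of_lt hmlt
  refine ⟨ρm, ρp, hρm, hρp, (vdW_deriv_zero_iff hmne).mpr hgm,
    (vdW_deriv_zero_iff hpne).mpr hgp, ?_⟩
  intro ρ hρ hd
  have hρne : ρ ≠ 3 := ne_of_lt hρ.2
  have hg : vdWg ρ = 0 := (vdW_deriv_zero_iff hρne).mp hd
  unfold vdWg at hg hgm hgp
  set A : ℝ := 9 - ρm * ρp - (ρm + ρp) * (6 - (ρm + ρp)) with hAdef
  set B : ℝ := ρm * ρp * (6 - (ρm + ρp)) - 3.4 with hBdef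
  have e1 : A * ρm + B = 0 := by rw [hAdef, hBdef]; linear_combination hgm
  have e2 : A * ρp + B = 0 := by rw [hAdef, hBdef]; linear_combination hgp
  have hA : A = 0 := by
    have hdiff : A * (ρm - ρp) = 0 := by linear_combination e1 - e2
    rcases mul_eq_zero.mp hdiff with h | h
    · exact h
    · exact absurd h (sub_ne_zero.mpr hmp)
  have hB : B = 0 := by linear_combination e1 - ρm * hA
  have hfact : (ρ - ρm) * (ρ - ρp) * (ρ - (6 - ρm - ρp)) = 0 := by
    rw [hAdef] at hA; rw [hBdef] at hB
    linear_combination hg - ρ * hA - hB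
  have h3 : ρ - (6 - ρm - ρp) ≠ 0 := by
    have := hρ.2; have := hρm.2; have := hρp.2
    intro hh; nlinarith
  rcases mul_eq_zero.mp hfact with hh | hh
  · rcases mul_eq_zero.mp hh with hh' | hh'
    · left; linarith [sub_eq_zero.mp hh']
    · right; linarith [sub_eq_zero.mp hh']
  · exact absurd hh h3
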